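/- arXiv:2106.05850 — 2 statements merged into one kernel-verified Lean document; each statement's English description precedes it below -/
import Mathlib

section
/- Let T_{ij}, for 1 ≤ i ≤ n₁ and 1 ≤ j ≤ n₂, be independent Bernoulli random variables with P(T_{ij}=1) = π_{ij}, where 0 < π_L ≤ π_{ij} ≤ 1 for all i,j. Then P( Σ_{i,j} T_{ij}/π_{ij}² ≥ 2 Σ_{i,j} 1/π_{ij} ) ≤ exp( −(log 2)/2 · π_L² · Σ_{i,j} 1/π_{ij} ). -/
open MeasureTheory ProbabilityTheory

/-- Chord bound for the exponential: on `[0, c]`, `exp x ≤ 1 + x * (exp c - 1) / c`. -/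
lemma exp_chord_aux {x c : ℝ} (hx : 0 ≤ x) (hxc : x ≤ c) (hc : 0 < c) :
    Real.exp x ≤ 1 + x * (Real.exp c - 1) / c := by
  have ha : (0:ℝ) ≤ 1 - x / c := by
    have : x / c ≤ 1 := (div_le_one hc).mpr hxc
    linarith
  have hb : (0:ℝ) ≤ x / c := by positivity
  have hab : (1 - x / c) + x / c = 1 := by ring
  have h := convexOn_exp.2 (Set.mem_univ (0:ℝ)) (Set.mem_univ c) ha hb hab
  simp only [smul_eq_mul, mul_zero, zero_add, Real.exp_zero, mul_one] at h
  have harg : x / c * c = x := by field_simp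
  rw [harg] at h
  have : 1 - x / c + x / c * Real.exp c = 1 + x * (Real.exp c - 1) / c := by
    field_simp; ring
  linarith [this ▸ h]

theorem frobenius_tail_bound
    {Ω : Type*} [MeasurableSpace Ω] (μ : Measure Ω) [IsProbabilityMeasure μ]
    (n₁ n₂ : ℕ)
    (T : Fin n₁ → Fin n₂ → Ω → ℝ)
    (π : Fin n₁ → Fin n₂ → ℝ) (πL : ℝ) (hπL : 0 < πL)
    (hπ : ∀ i j, πL ≤ π i j ∧ π i j ≤ 1)
    (hTmeas : ∀ i j, Measurable (T i j))
    (hT01 : ∀ i j ω, T i j ω = 0 ∨ T i j ω = 1)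
    (hprob : ∀ i j, μ {ω | T i j ω = 1} = ENNReal.ofReal (π i j))
    (hindep : iIndepFun (β := fun _ : Fin n₁ × Fin n₂ => ℝ)
      (fun p ω => T p.1 p.2 ω) μ) :
    μ {ω | 2 * ∑ i, ∑ j, (π i j)⁻¹ ≤ ∑ i, ∑ j, T i j ω / (π i j) ^ 2}
      ≤ ENNReal.ofReal
        (Real.exp (-(Real.log 2 / 2) * πL ^ 2 * ∑ i, ∑ j, (π i j)⁻¹)) := by
  classical
  have hπpos : ∀ i j, 0 < π i j := fun i j => lt_of_lt_of_le hπL (hπ i j).1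
  have hlog2 : (0:ℝ) < Real.log 2 := Real.log_pos one_lt_two
  set S : ℝ := ∑ i, ∑ j, (π i j)⁻¹ with hS
  have hS0 : 0 ≤ S := by
    apply Finset.sum_nonneg; intro i _
    apply Finset.sum_nonneg; intro j _
    exact inv_nonneg.2 (hπpos i j).le
  set t : ℝ := Real.log 2 * πL ^ 2 with ht
  have htpos : 0 < t := by positivity
  set Y : Fin n₁ × Fin n₂ → Ω → ℝ := fun p ω => T p.1 p.2 ω / (π p.1 p.2) ^ 2 with hY
  have hYmeas : ∀ p, Measurable (Y p) := fun p => (hTmeas p.1 p.2).div_const _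
  have hindepY : iIndepFun Y μ :=
    hindep.comp (fun p (x : ℝ) => x / (π p.1 p.2) ^ 2)
      (fun p => measurable_id.div_const _)
  have hsum : ∀ ω, ∑ i, ∑ j, T i j ω / (π i j) ^ 2 = ∑ p : Fin n₁ × Fin n₂, Y p ω := by
    intro ω; rw [Fintype.sum_prod_type]
  have hSsum : S = ∑ p : Fin n₁ × Fin n₂, (π p.1 p.2)⁻¹ := by
    rw [hS, Fintype.sum_prod_type]
  have hT01' : ∀ i j ω, 0 ≤ T i j ω ∧ T i j ω ≤ 1 := by
    intro i j ω; rcases hT01 i j ω with h | h <;> simp [h]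
  -- T as an indicator
  have hsetmeas : ∀ i j, MeasurableSet {ω | T i j ω = 1} := fun i j =>
    (hTmeas i j) (measurableSet_singleton 1)
  have hTind : ∀ i j, T i j = Set.indicator {ω | T i j ω = 1} (fun _ => (1:ℝ)) := by
    intro i j; funext ω
    rcases hT01 i j ω with h | h
    · rw [Set.indicator_of_notMem, h]
      simp [Set.mem_setOf_eq, h]
    · rw [Set.indicator_of_mem]
      · exact h
      · exact h
  have hTint : ∀ i j, Integrable (T i j) μ := by
    intro i j; rw [hTind i j]
    exact (integrable_const (1:ℝ)).indicator (hsetmeas i j)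
  have hTintegral : ∀ i j, ∫ ω, T i j ω ∂μ = π i j := by
    intro i j
    rw [show (fun ω => T i j ω) = T i j from rfl, hTind i j,
      integral_indicator_const (1:ℝ) (hsetmeas i j), measureReal_def, hprob i j, smul_eq_mul, mul_one,
      ENNReal.toReal_ofReal (hπpos i j).le]
  -- the mgf of each summand
  have hmgf : ∀ p : Fin n₁ × Fin n₂, mgf (Y p) μ t
      = 1 + (π p.1 p.2) * (Real.exp (t / (π p.1 p.2) ^ 2) - 1) := by
    intro p
    have hpt : ∀ ω, Real.exp (t * Y p ω)
        = 1 + (Real.exp (t / (π p.1 p.2) ^ 2) - 1) * T p.1 p.2 ω := by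
      intro ω
      rcases hT01 p.1 p.2 ω with h | h
      · simp [hY, h]
      · simp [hY, h, div_eq_mul_inv]
    simp only [mgf]
    simp_rw [hpt]
    rw [integral_add (integrable_const 1) ((hTint p.1 p.2).const_mul _),
      integral_const, integral_const_mul, hTintegral p.1 p.2]
    simp [mul_comm]
  -- bound on each mgf
  have hmgf_le : ∀ p : Fin n₁ × Fin n₂, mgf (Y p) μ t
      ≤ Real.exp (πL ^ 2 * (π p.1 p.2)⁻¹) := by
    intro p
    obtain ⟨h1, h2⟩ := hπ p.1 p.2
    have hp0 := hπpos p.1 p.2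
    set s : ℝ := t / (π p.1 p.2) ^ 2 with hs
    have hs0 : 0 ≤ s := by positivity
    have hsc : s ≤ Real.log 2 := by
      have hsq : πL ^ 2 ≤ (π p.1 p.2) ^ 2 := by nlinarith
      rw [hs, ht, div_le_iff₀ (by positivity)]
      exact mul_le_mul_of_nonneg_left hsq hlog2.le
    have hchord := exp_chord_aux hs0 hsc hlog2
    rw [Real.exp_log two_pos] at hchord
    have key : (π p.1 p.2) * (Real.exp s - 1) ≤ πL ^ 2 * (π p.1 p.2)⁻¹ := by
      have h3 : Real.exp s - 1 ≤ s / Real.log 2 := by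
        have : (2:ℝ) - 1 = 1 := by norm_num
        rw [this, mul_one] at hchord
        linarith
      have h4 : (π p.1 p.2) * (Real.exp s - 1) ≤ (π p.1 p.2) * (s / Real.log 2) :=
        mul_le_mul_of_nonneg_left h3 hp0.le
      have h5 : (π p.1 p.2) * (s / Real.log 2) = πL ^ 2 * (π p.1 p.2)⁻¹ := by
        rw [hs, ht]; field_simp
      linarith
    calc mgf (Y p) μ t = 1 + (π p.1 p.2) * (Real.exp s - 1) := hmgf p
      _ ≤ 1 + πL ^ 2 * (π p.1 p.2)⁻¹ := by linarith
      _ ≤ Real.exp (πL ^ 2 * (π p.1 p.2)⁻¹) := by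
          have := Real.add_one_le_exp (πL ^ 2 * (π p.1 p.2)⁻¹)
          linarith
  -- integrability of the exponential of the sum
  have hint : Integrable (fun ω => Real.exp (t * ∑ p : Fin n₁ × Fin n₂, Y p ω)) μ := by
    apply Integrable.mono'
      (integrable_const (Real.exp (t * ∑ p : Fin n₁ × Fin n₂, ((π p.1 p.2) ^ 2)⁻¹)))
    · exact (measurable_const.mul
        (Finset.measurable_sum _ fun p _ => hYmeas p)).exp.aestronglyMeasurable
    · filter_upwards with ω
      rw [Real.norm_eq_abs, Real.abs_exp]
      apply Real.exp_le_exp.2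
      apply mul_le_mul_of_nonneg_left _ htpos.le
      apply Finset.sum_le_sum
      intro p _
      have hp0 := hπpos p.1 p.2
      rw [hY]
      simp only
      rw [div_le_iff₀ (pow_pos hp0 2), inv_mul_cancel₀ (pow_pos hp0 2).ne']
      exact (hT01' p.1 p.2 ω).2
  -- Chernoff bound
  have hmarkov := measure_ge_le_exp_mul_mgf (μ := μ)
    (X := fun ω => ∑ p : Fin n₁ × Fin n₂, Y p ω) (t := t) (2 * S) htpos.le hint
  have hmgfsum : mgf (fun ω => ∑ p : Fin n₁ × Fin n₂, Y p ω) μ t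
      = ∏ p : Fin n₁ × Fin n₂, mgf (Y p) μ t := by
    have h := hindepY.mgf_sum (t := t) hYmeas Finset.univ
    have : (fun ω => ∑ p : Fin n₁ × Fin n₂, Y p ω)
        = ∑ p : Fin n₁ × Fin n₂, Y p := by
      funext ω; rw [Finset.sum_apply]
    rw [this, h]
  have hprod_le : ∏ p : Fin n₁ × Fin n₂, mgf (Y p) μ t ≤ Real.exp (πL ^ 2 * S) := by
    calc ∏ p : Fin n₁ × Fin n₂, mgf (Y p) μ t
        ≤ ∏ p : Fin n₁ × Fin n₂, Real.exp (πL ^ 2 * (π p.1 p.2)⁻¹) :=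
          Finset.prod_le_prod (fun p _ => mgf_nonneg) (fun p _ => hmgf_le p)
      _ = Real.exp (∑ p : Fin n₁ × Fin n₂, πL ^ 2 * (π p.1 p.2)⁻¹) :=
          (Real.exp_sum _ _).symm
      _ = Real.exp (πL ^ 2 * S) := by rw [← Finset.mul_sum, ← hSsum]
  have hfinal : (μ {ω | 2 * S ≤ ∑ p : Fin n₁ × Fin n₂, Y p ω}).toReal
      ≤ Real.exp (-(Real.log 2 / 2) * πL ^ 2 * S) := by
    calc (μ {ω | 2 * S ≤ ∑ p : Fin n₁ × Fin n₂, Y p ω}).toReal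
        ≤ Real.exp (-t * (2 * S)) * mgf (fun ω => ∑ p : Fin n₁ × Fin n₂, Y p ω) μ t :=
          hmarkov
      _ ≤ Real.exp (-t * (2 * S)) * Real.exp (πL ^ 2 * S) := by
          apply mul_le_mul_of_nonneg_left _ (Real.exp_pos _).le
          rw [hmgfsum]; exact hprod_le
      _ = Real.exp (-t * (2 * S) + πL ^ 2 * S) := (Real.exp_add _ _).symm
      _ ≤ Real.exp (-(Real.log 2 / 2) * πL ^ 2 * S) := by
          apply Real.exp_le_exp.2
          rw [ht]
          have hlog23 : (2:ℝ)/3 ≤ Real.log 2 := by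
            have := Real.log_two_gt_d9
            linarith
          have hpl2S : 0 ≤ πL ^ 2 * S := by positivity
          nlinarith
  have hset : {ω | 2 * S ≤ ∑ i, ∑ j, T i j ω / (π i j) ^ 2}
      = {ω | 2 * S ≤ ∑ p : Fin n₁ × Fin n₂, Y p ω} := by
    ext ω; simp only [Set.mem_setOf_eq, hsum ω]
  rw [hset, ← ENNReal.ofReal_toReal (measure_ne_top μ _)]
  exact ENNReal.ofReal_le_ofReal hfinal
end

section
/- For any matrix B ∈ ℝ^{n₁×n₂}, the nuclear norm satisfies ‖B‖_* ≤ √(n₁n₂) · ‖B‖_max, where ‖B‖_max = inf{‖U‖_{2,∞}‖V‖_{2,∞} : B = UVᵀ}. -/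
open scoped BigOperators

/-- Spectral norm (operator norm w.r.t. Euclidean norms). -/
noncomputable def specNorm {m n : ℕ} (A : Matrix (Fin m) (Fin n) ℝ) : ℝ :=
  ‖LinearMap.toContinuousLinearMap (Matrix.toEuclideanLin A)‖

/-- Maximum Euclidean row norm. -/
noncomputable def twoInfNorm {m k : ℕ} (U : Matrix (Fin m) (Fin k) ℝ) : ℝ :=
  ⨆ i, Real.sqrt (∑ j, U i j ^ 2)

/-- Max norm: infimum of products of maximum row norms over factorizations. -/
noncomputable def maxNorm {m n : ℕ} (B : Matrix (Fin m) (Fin n) ℝ) : ℝ :=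
  sInf {r | ∃ (k : ℕ) (U : Matrix (Fin m) (Fin k) ℝ) (V : Matrix (Fin n) (Fin k) ℝ),
    B = U * V.transpose ∧ r = twoInfNorm U * twoInfNorm V}

/-- Nuclear norm, via duality with the spectral norm. -/
noncomputable def nucNorm {m n : ℕ} (B : Matrix (Fin m) (Fin n) ℝ) : ℝ :=
  sSup {r | ∃ X : Matrix (Fin m) (Fin n) ℝ, specNorm X ≤ 1 ∧
    r = ∑ i, ∑ j, X i j * B i j}

lemma mulVec_sq_sum_le {m n : ℕ} (X : Matrix (Fin m) (Fin n) ℝ) (hX : specNorm X ≤ 1)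
    (v : Fin n → ℝ) : ∑ i, (X.mulVec v i)^2 ≤ ∑ j, (v j)^2 := by
  have h := (LinearMap.toContinuousLinearMap (Matrix.toEuclideanLin X)).le_opNorm
      ((WithLp.equiv 2 (Fin n → ℝ)).symm v)
  simp only [LinearMap.coe_toContinuousLinearMap', WithLp.equiv_symm_apply,
    Matrix.toEuclideanLin_apply_piLp_toLp, EuclideanSpace.norm_eq,
    PiLp.toLp_apply, Real.norm_eq_abs, sq_abs] at h
  have h1 : Real.sqrt (∑ i, (X.mulVec v i)^2) ≤ Real.sqrt (∑ j, (v j)^2) := by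
    calc Real.sqrt (∑ i, (X.mulVec v i)^2) ≤ specNorm X * Real.sqrt (∑ j, (v j)^2) := h
    _ ≤ 1 * Real.sqrt (∑ j, (v j)^2) :=
        mul_le_mul_of_nonneg_right hX (Real.sqrt_nonneg _)
    _ = _ := one_mul _
  exact (Real.sqrt_le_sqrt_iff (by positivity)).mp h1

lemma twoInfNorm_nonneg {m k : ℕ} (U : Matrix (Fin m) (Fin k) ℝ) : 0 ≤ twoInfNorm U := by
  rcases isEmpty_or_nonempty (Fin m) with h | h
  · simp [twoInfNorm, Real.iSup_of_isEmpty]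
  · exact le_ciSup_of_le (Set.Finite.bddAbove (Set.finite_range _)) (Classical.arbitrary _)
      (Real.sqrt_nonneg _)

lemma row_le_twoInfNorm {m k : ℕ} (U : Matrix (Fin m) (Fin k) ℝ) (i : Fin m) :
    Real.sqrt (∑ j, U i j ^ 2) ≤ twoInfNorm U := by
  unfold twoInfNorm
  exact le_ciSup (f := fun i => Real.sqrt (∑ j, U i j ^ 2))
    (Set.Finite.bddAbove (Set.finite_range _)) i

lemma key {n₁ n₂ k : ℕ} (X : Matrix (Fin n₁) (Fin n₂) ℝ) (hX : specNorm X ≤ 1)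
    (U : Matrix (Fin n₁) (Fin k) ℝ) (V : Matrix (Fin n₂) (Fin k) ℝ) :
    ∑ i, ∑ j, X i j * (U * V.transpose) i j ≤
      Real.sqrt ((n₁ : ℝ) * n₂) * (twoInfNorm U * twoInfNorm V) := by
  have hW : ∑ i, ∑ l, ((X * V) i l)^2 ≤ (n₂ : ℝ) * twoInfNorm V ^ 2 := by
    rw [Finset.sum_comm]
    calc ∑ l, ∑ i, ((X * V) i l)^2
        = ∑ l : Fin k, ∑ i, (X.mulVec (fun j => V j l) i)^2 := by
          simp [Matrix.mul_apply, Matrix.mulVec, dotProduct]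
      _ ≤ ∑ l : Fin k, ∑ j, (V j l)^2 := by
          exact Finset.sum_le_sum fun l _ => mulVec_sq_sum_le X hX _
      _ = ∑ j, ∑ l, (V j l)^2 := Finset.sum_comm
      _ ≤ ∑ j : Fin n₂, twoInfNorm V ^ 2 := by
          refine Finset.sum_le_sum fun j _ => ?_
          have h1 := row_le_twoInfNorm V j
          have h2 : Real.sqrt (∑ l, V j l ^ 2) ^ 2 = ∑ l, V j l ^ 2 :=
            Real.sq_sqrt (by positivity)
          calc ∑ l, V j l ^ 2 = Real.sqrt (∑ l, V j l ^ 2) ^ 2 := h2.symm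
            _ ≤ twoInfNorm V ^ 2 := by
              exact pow_le_pow_left₀ (Real.sqrt_nonneg _) h1 2
      _ = (n₂ : ℝ) * twoInfNorm V ^ 2 := by simp [Finset.sum_const]
  calc ∑ i, ∑ j, X i j * (U * V.transpose) i j
      = ∑ i, ∑ l, U i l * (X * V) i l := by
        simp only [Matrix.mul_apply, Matrix.transpose_apply, Finset.mul_sum, Finset.sum_mul]
        rw [Finset.sum_congr rfl fun i _ => Finset.sum_comm]
        congr 1; ext i; congr 1; ext l; congr 1; ext j; ring
    _ ≤ ∑ i, Real.sqrt (∑ l, U i l ^ 2) * Real.sqrt (∑ l, ((X * V) i l) ^ 2) := by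
        exact Finset.sum_le_sum fun i _ => Real.sum_mul_le_sqrt_mul_sqrt _ _ _
    _ ≤ ∑ i, twoInfNorm U * Real.sqrt (∑ l, ((X * V) i l) ^ 2) := by
        refine Finset.sum_le_sum fun i _ => ?_
        exact mul_le_mul_of_nonneg_right (row_le_twoInfNorm U i) (Real.sqrt_nonneg _)
    _ = twoInfNorm U * ∑ i, Real.sqrt (∑ l, ((X * V) i l) ^ 2) := by
        rw [Finset.mul_sum]
    _ ≤ twoInfNorm U * (Real.sqrt (n₁ : ℝ) * Real.sqrt (∑ i, ∑ l, ((X * V) i l) ^ 2)) := by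
        refine mul_le_mul_of_nonneg_left ?_ (twoInfNorm_nonneg U)
        calc ∑ i, Real.sqrt (∑ l, ((X * V) i l) ^ 2)
            = ∑ i : Fin n₁, Real.sqrt 1 * Real.sqrt (∑ l, ((X * V) i l) ^ 2) := by simp
          _ ≤ Real.sqrt (∑ _i : Fin n₁, (1:ℝ)) * Real.sqrt (∑ i, ∑ l, ((X * V) i l) ^ 2) :=
              Real.sum_sqrt_mul_sqrt_le _ (fun _ => zero_le_one) (fun i => by positivity)
          _ = _ := by simp
    _ ≤ twoInfNorm U * (Real.sqrt (n₁ : ℝ) * Real.sqrt ((n₂ : ℝ) * twoInfNorm V ^ 2)) := by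
        refine mul_le_mul_of_nonneg_left (mul_le_mul_of_nonneg_left ?_ (Real.sqrt_nonneg _))
          (twoInfNorm_nonneg U)
        exact Real.sqrt_le_sqrt hW
    _ = Real.sqrt ((n₁ : ℝ) * n₂) * (twoInfNorm U * twoInfNorm V) := by
        rw [Real.sqrt_mul (by positivity), Real.sqrt_mul (by positivity),
          Real.sqrt_sq (twoInfNorm_nonneg V)]
        ring

theorem nucNorm_le_sqrt_mul_maxNorm {n₁ n₂ : ℕ}
    (B : Matrix (Fin n₁) (Fin n₂) ℝ) :
    nucNorm B ≤ Real.sqrt ((n₁ : ℝ) * n₂) * maxNorm B := by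
  set s := Real.sqrt ((n₁ : ℝ) * n₂) with hs
  set T := {r | ∃ (k : ℕ) (U : Matrix (Fin n₁) (Fin k) ℝ) (V : Matrix (Fin n₂) (Fin k) ℝ),
    B = U * V.transpose ∧ r = twoInfNorm U * twoInfNorm V} with hT
  have hne : T.Nonempty := ⟨twoInfNorm B * twoInfNorm (1 : Matrix (Fin n₂) (Fin n₂) ℝ),
    n₂, B, 1, by rw [Matrix.transpose_one, Matrix.mul_one], rfl⟩
  have step1 : ∀ r ∈ T, nucNorm B ≤ s * r := by
    rintro r ⟨k, U, V, hB, rfl⟩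
    have hr0 : 0 ≤ twoInfNorm U * twoInfNorm V :=
      mul_nonneg (twoInfNorm_nonneg U) (twoInfNorm_nonneg V)
    apply Real.sSup_le
    · rintro r' ⟨X, hX, rfl⟩
      rw [hB]
      exact key X hX U V
    · positivity
  rcases eq_or_lt_of_le (Real.sqrt_nonneg ((n₁ : ℝ) * n₂)) with h0 | hpos
  · obtain ⟨r, hr⟩ := hne
    have := step1 r hr
    have hs0 : s = 0 := h0.symm
    rw [hs0, zero_mul] at this ⊢
    exact this
  · have h3 : nucNorm B / s ≤ sInf T :=
      le_csInf hne fun r hr => (div_le_iff₀ hpos).mpr ((step1 r hr).trans_eq (mul_comm _ _))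
    have : maxNorm B = sInf T := rfl
    calc nucNorm B = s * (nucNorm B / s) := by field_simp [show s ≠ 0 from hpos.ne']
      _ ≤ s * sInf T := mul_le_mul_of_nonneg_left h3 hpos.le
      _ = s * maxNorm B := by rw [this]
end
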